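/- Let 𝒲 ∈ 𝒮^{r×n} and let S ⊆ ℝⁿ be a linear subspace. Then: (a) the set of 𝒲-monomial maps m(𝒲) is Q(𝒲)-affine; (b) Δ_S m(𝒲) = Q(𝒲)(S \ {0}). -/

import Mathlib

/-- The positive orthant `ℝⁿ_{>0}`. -/
def posOrth (n : ℕ) : Set (Fin n → ℝ) := {x | ∀ i, 0 < x i}

/-- The generalized monomial map `μ_B : x ↦ x^B`, `(x^B)_j = ∏ᵢ xᵢ^{B j i}`. -/
noncomputable def monMap {n r : ℕ} (B : Matrix (Fin r) (Fin n) ℝ) (x : Fin n → ℝ) :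
    Fin r → ℝ :=
  fun j => ∏ i, x i ^ B j i

/-- `m(B) = {x ↦ κ ∗ x^B : κ ∈ ℝʳ_{>0}}`. -/
noncomputable def mSet {n r : ℕ} (B : Matrix (Fin r) (Fin n) ℝ) :
    Set ((Fin n → ℝ) → (Fin r → ℝ)) :=
  {G | ∃ κ : Fin r → ℝ, (∀ j, 0 < κ j) ∧ G = fun x => fun j => κ j * monMap B x j}

/-- The qualitative class `Q(𝒲)` of a matrix `𝒲` of sets of signs. -/
noncomputable def QualS {n r : ℕ} (𝒲 : Matrix (Fin r) (Fin n) (Set SignType)) :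
    Set (Matrix (Fin r) (Fin n) ℝ) :=
  {B | ∀ i j, SignType.sign (B i j) ∈ 𝒲 i j}

/-- The set of `𝒲`-monomial maps `m(𝒲) = ⋃_{B ∈ Q(𝒲)} m(B)`. -/
noncomputable def mW {n r : ℕ} (𝒲 : Matrix (Fin r) (Fin n) (Set SignType)) :
    Set ((Fin n → ℝ) → (Fin r → ℝ)) :=
  {G | ∃ B ∈ QualS 𝒲, G ∈ mSet B}

/-- `G : X → ℝʳ` is `ℬ`-affine on `X`. -/
def IsAffine {n r : ℕ} (X : Set (Fin n → ℝ)) (ℬ : Set (Matrix (Fin r) (Fin n) ℝ))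
    (G : (Fin n → ℝ) → (Fin r → ℝ)) : Prop :=
  ∀ x ∈ X, ∀ y ∈ X, ∃ M ∈ ℬ, G x - G y = M.mulVec (x - y)

/-- `Δ_S 𝒢` for maps on the positive orthant. -/
def DeltaS {n r : ℕ} (X : Set (Fin n → ℝ)) (S : Submodule ℝ (Fin n → ℝ))
    (𝒢 : Set ((Fin n → ℝ) → (Fin r → ℝ))) : Set (Fin r → ℝ) :=
  {w | ∃ G ∈ 𝒢, ∃ x ∈ X, ∃ y ∈ X, x - y ∈ S ∧ x - y ≠ 0 ∧ w = G x - G y}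

/-- `ℬ(T) = {M z : M ∈ ℬ, z ∈ T}`. -/
def matImage {n r : ℕ} (ℬ : Set (Matrix (Fin r) (Fin n) ℝ)) (T : Set (Fin n → ℝ)) :
    Set (Fin r → ℝ) :=
  {w | ∃ M ∈ ℬ, ∃ z ∈ T, w = M.mulVec z}

lemma sign_pos_mul (a c : ℝ) (ha : 0 < a) : SignType.sign (a * c) = SignType.sign c := by
  rw [sign_mul, sign_pos ha, one_mul]

/-- Mean-value-type fact for `t ↦ t^b` on positives. -/
lemma rpow_sub_rpow_factor (x y b : ℝ) (hx : 0 < x) (hy : 0 < y) :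
    ∃ c : ℝ, SignType.sign c = SignType.sign b ∧ x ^ b - y ^ b = c * (x - y) := by
  by_cases hxy : x = y
  · exact ⟨b, rfl, by rw [hxy]; ring⟩
  · refine ⟨(x ^ b - y ^ b) / (x - y), ?_, (div_mul_cancel₀ _ (sub_ne_zero.2 hxy)).symm⟩
    have key : ∀ u v : ℝ, 0 < u → 0 < v → u < v → ∀ b' : ℝ,
        SignType.sign ((u ^ b' - v ^ b') / (u - v)) = SignType.sign b' := by
      intro u v hu hv huv b'
      have hlog : Real.log u < Real.log v := Real.log_lt_log hu huv
      have hu' : u ^ b' = Real.exp (b' * Real.log u) := by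
        rw [Real.rpow_def_of_pos hu, mul_comm]
      have hv' : v ^ b' = Real.exp (b' * Real.log v) := by
        rw [Real.rpow_def_of_pos hv, mul_comm]
      have hden : u - v < 0 := sub_neg.2 huv
      rcases lt_trichotomy b' 0 with hb | hb | hb
      · have h1 : b' * Real.log v < b' * Real.log u := by
          exact mul_lt_mul_of_neg_left hlog hb
        have h2 : v ^ b' < u ^ b' := by rw [hu', hv']; exact Real.exp_lt_exp.2 h1
        have : (u ^ b' - v ^ b') / (u - v) < 0 :=
          div_neg_of_pos_of_neg (sub_pos.2 h2) hden
        rw [sign_neg this, sign_neg hb]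
      · simp [hb, Real.rpow_zero]
      · have h1 : b' * Real.log u < b' * Real.log v := by
          exact mul_lt_mul_of_pos_left hlog hb
        have h2 : u ^ b' < v ^ b' := by rw [hu', hv']; exact Real.exp_lt_exp.2 h1
        have : 0 < (u ^ b' - v ^ b') / (u - v) :=
          div_pos_of_neg_of_neg (sub_neg.2 h2) hden
        rw [sign_pos this, sign_pos hb]
    rcases lt_or_gt_of_ne hxy with h | h
    · exact key x y hx hy h b
    · have := key y x hy hx h b
      rw [← this]
      congr 1
      rw [div_eq_div_iff (sub_ne_zero.2 hxy) (sub_ne_zero.2 h.ne)]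
      ring

/-- Telescoping: difference of products as positive combination of differences. -/
lemma prod_sub_prod {n : ℕ} (s : Finset (Fin n)) (u v : Fin n → ℝ)
    (hu : ∀ i, 0 < u i) (hv : ∀ i, 0 < v i) :
    ∃ d : Fin n → ℝ, (∀ i, 0 < d i) ∧
      (∏ i ∈ s, u i) - (∏ i ∈ s, v i) = ∑ i ∈ s, d i * (u i - v i) := by
  induction s using Finset.induction_on with
  | empty => exact ⟨fun _ => 1, fun _ => one_pos, by simp⟩
  | insert _ _ ha ih =>
    rename_i a s
    obtain ⟨d, hd, hiff⟩ := ih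
    refine ⟨fun i => if i = a then ∏ k ∈ s, v k else u a * d i, ?_, ?_⟩
    · intro i
      by_cases h : i = a <;> simp [h, Finset.prod_pos fun k _ => hv k,
        mul_pos (hu a) (hd i)]
    · rw [Finset.prod_insert ha, Finset.prod_insert ha, Finset.sum_insert ha]
      have : ∑ i ∈ s, (if i = a then ∏ k ∈ s, v k else u a * d i) * (u i - v i)
          = ∑ i ∈ s, u a * (d i * (u i - v i)) := by
        refine Finset.sum_congr rfl fun i hi => ?_
        have : i ≠ a := fun h => ha (h ▸ hi)
        rw [if_neg this]; ring
      rw [this, show (fun i => if i = a then ∏ k ∈ s, v k else u a * d i) a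
        = ∏ k ∈ s, v k from if_pos rfl, ← Finset.mul_sum, ← hiff]
      ring

/-- Part (a) as a standalone lemma. -/
lemma mW_affine {n r : ℕ} (𝒲 : Matrix (Fin r) (Fin n) (Set SignType)) :
    ∀ G ∈ mW 𝒲, IsAffine (posOrth n) (QualS 𝒲) G := by
  intro G hG x hx y hy
  obtain ⟨B, hB, κ, hκ, rfl⟩ := hG
  choose c hcsign hceq using fun j i =>
    rpow_sub_rpow_factor (x i) (y i) (B j i) (hx i) (hy i)
  choose d hd hdeq using fun j =>
    prod_sub_prod (Finset.univ : Finset (Fin n)) (fun i => x i ^ B j i)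
      (fun i => y i ^ B j i)
      (fun i => Real.rpow_pos_of_pos (hx i) _) (fun i => Real.rpow_pos_of_pos (hy i) _)
  refine ⟨fun j i => κ j * d j i * c j i, ?_, ?_⟩
  · intro j i
    rw [sign_pos_mul _ _ (mul_pos (hκ j) (hd j i)), hcsign]
    exact hB j i
  · funext j
    simp only [Pi.sub_apply, Matrix.mulVec, dotProduct, monMap]
    rw [← mul_sub, hdeq j]
    rw [Finset.mul_sum]
    refine Finset.sum_congr rfl fun i _ => ?_
    rw [hceq j i]
    ring

/-- For `𝒲 ∈ 𝒮^{r×n}` (entries: non-empty sets of signs):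
(a) `m(𝒲)` is `Q(𝒲)`-affine; (b) `Δ_S m(𝒲) = Q(𝒲)(S \ {0})`. -/
theorem stmt15 {n r : ℕ} (𝒲 : Matrix (Fin r) (Fin n) (Set SignType))
    (h𝒲 : ∀ i j, (𝒲 i j).Nonempty) (S : Submodule ℝ (Fin n → ℝ)) :
    (∀ G ∈ mW 𝒲, IsAffine (posOrth n) (QualS 𝒲) G) ∧
    DeltaS (posOrth n) S (mW 𝒲) = matImage (QualS 𝒲) ((S : Set (Fin n → ℝ)) \ {0}) := by
  refine ⟨mW_affine 𝒲, ?_⟩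
  ext w
  constructor
  · rintro ⟨G, hG, x, hx, y, hy, hS, hne, rfl⟩
    obtain ⟨M, hM, hEq⟩ := mW_affine 𝒲 G hG x hx y hy
    exact ⟨M, hM, x - y, ⟨hS, hne⟩, hEq⟩
  · rintro ⟨M, hM, z, ⟨hzS, hz0⟩, rfl⟩
    rw [Set.mem_singleton_iff] at hz0
    set T : ℝ := ∑ i, |z i| with hT
    have hT0 : 0 ≤ T := Finset.sum_nonneg fun i _ => abs_nonneg _
    set lam : ℝ := (1 + T)⁻¹ with hlam
    have hlam0 : 0 < lam := inv_pos.2 (by linarith)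
    -- positivity of 1 + lam * z i
    have hxpos : ∀ i, 0 < 1 + lam * z i := by
      intro i
      have h1 : |z i| ≤ T := Finset.single_le_sum (fun k _ => abs_nonneg (z k))
        (Finset.mem_univ i)
      have h2 : |lam * z i| = lam * |z i| := by
        rw [abs_mul, abs_of_pos hlam0]
      have h3 : lam * T < 1 := by
        have : lam * (1 + T) = 1 := inv_mul_cancel₀ (by linarith)
        nlinarith
      have h4 : |lam * z i| < 1 := by
        rw [h2]
        calc lam * |z i| ≤ lam * T := by nlinarith
          _ < 1 := h3
      have := neg_abs_le (lam * z i)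
      linarith
    -- signs of logs
    have hlogpos : ∀ i, z i ≠ 0 → 0 < z i / Real.log (1 + lam * z i) := by
      intro i hzi
      rcases lt_or_gt_of_ne hzi with h | h
      · have hlt : 1 + lam * z i < 1 := by nlinarith
        exact div_pos_of_neg_of_neg h (Real.log_neg (hxpos i) hlt)
      · have hgt : 1 < 1 + lam * z i := by nlinarith
        exact div_pos h (Real.log_pos hgt)
    set B : Matrix (Fin r) (Fin n) ℝ :=
      fun j i => if z i = 0 then M j i else M j i * (z i / Real.log (1 + lam * z i))
        with hBdef
    have hBQ : B ∈ QualS 𝒲 := by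
      intro j i
      by_cases hzi : z i = 0
      · simpa [hBdef, hzi] using hM j i
      · have : SignType.sign (B j i) = SignType.sign (M j i) := by
          rw [hBdef]
          simp only [if_neg hzi]
          rw [sign_mul, sign_pos (hlogpos i hzi), mul_one]
        rw [this]; exact hM j i
    have hlogeq : ∀ j i, B j i * Real.log (1 + lam * z i) = M j i * z i := by
      intro j i
      by_cases hzi : z i = 0
      · simp [hBdef, hzi]
      · have hne1 : 1 + lam * z i ≠ 1 := by
          intro h
          apply hzi
          have : lam * z i = 0 := by linarith
          rcases mul_eq_zero.1 this with h' | h'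
          · exact absurd h' (ne_of_gt hlam0)
          · exact h'
        have hlogne : Real.log (1 + lam * z i) ≠ 0 := by
          intro h
          rcases Real.log_eq_zero.1 h with h' | h' | h'
          · exact absurd h' (ne_of_gt (hxpos i))
          · exact hne1 h'
          · linarith [hxpos i]
        rw [hBdef]
        simp only [if_neg hzi]
        field_simp
        rw [mul_comm (z i) lam, mul_div_assoc, div_self hlogne, mul_one]
    set wv : Fin r → ℝ := M.mulVec z with hwv
    set κ : Fin r → ℝ :=
      fun j => if wv j = 0 then 1 else wv j / (Real.exp (wv j) - 1) with hκdef
    have hκpos : ∀ j, 0 < κ j := by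
      intro j
      rw [hκdef]
      by_cases h : wv j = 0
      · simp [h]
      · simp only [if_neg h]
        rcases lt_or_gt_of_ne h with hlt | hgt
        · have : Real.exp (wv j) < 1 := Real.exp_lt_one_iff.2 hlt
          exact div_pos_of_neg_of_neg hlt (by linarith)
        · have : 1 < Real.exp (wv j) := Real.one_lt_exp_iff.2 hgt
          exact div_pos hgt (by linarith)
    set G : (Fin n → ℝ) → (Fin r → ℝ) :=
      fun x => fun j => κ j * monMap B x j with hGdef
    set x : Fin n → ℝ := fun i => 1 + lam * z i with hxdef
    set y : Fin n → ℝ := fun i => 1 with hydef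
    have hxy : x - y = lam • z := by
      funext i
      simp [hxdef, hydef]
    refine ⟨G, ⟨B, hBQ, κ, hκpos, rfl⟩, x, hxpos, y, fun i => one_pos, ?_, ?_, ?_⟩
    · rw [hxy]; exact S.smul_mem lam hzS
    · rw [hxy]
      exact smul_ne_zero (ne_of_gt hlam0) hz0
    · funext j
      have hmx : monMap B x j = Real.exp (wv j) := by
        rw [monMap]
        have : ∀ i ∈ Finset.univ, x i ^ B j i = Real.exp (B j i * Real.log (x i)) := by
          intro i _
          rw [Real.rpow_def_of_pos (hxpos i), mul_comm]
        rw [Finset.prod_congr rfl this, ← Real.exp_sum]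
        congr 1
        rw [hwv]
        simp only [Matrix.mulVec, dotProduct]
        exact Finset.sum_congr rfl fun i _ => hlogeq j i
      have hmy : monMap B y j = 1 := by
        simp [monMap, hydef, Real.one_rpow]
      show wv j = κ j * monMap B x j - κ j * monMap B y j
      rw [hmx, hmy, ← mul_sub]
      simp only [hκdef]
      by_cases h : wv j = 0
      · simp [h]
      · simp only [if_neg h]
        have hexpne : Real.exp (wv j) - 1 ≠ 0 := by
          intro h'
          apply h
          have : Real.exp (wv j) = 1 := by linarith
          rwa [← Real.exp_zero, Real.exp_eq_exp] at this
        rw [div_mul_cancel₀ _ hexpne]
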